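/- Let w, φ be periodic grid functions on the N×N grid with ‖w‖_∞ ≤ B' and consider T = ∇⁺_h·((𝒜 e) ∇⁻_h φ) where e is a periodic grid function and 𝒜 denotes componentwise averaging (𝒜ₓ in x, 𝒜_y in y). If ‖∇⁻_h φ‖_∞ ≤ B', then for every grid function f, |⟨T, f⟩| ≤ √2 B' ‖e‖ ‖∇⁻_h f‖. -/
import Mathlib


noncomputable def Dxm (N : ℕ) (h : ℝ) (u : ZMod N × ZMod N → ℝ) : ZMod N × ZMod N → ℝ :=
  fun p => (u p - u (p.1 - 1, p.2)) / h

noncomputable def Dym (N : ℕ) (h : ℝ) (u : ZMod N × ZMod N → ℝ) : ZMod N × ZMod N → ℝ :=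
  fun p => (u p - u (p.1, p.2 - 1)) / h

noncomputable def Dxp (N : ℕ) (h : ℝ) (u : ZMod N × ZMod N → ℝ) : ZMod N × ZMod N → ℝ :=
  fun p => (u (p.1 + 1, p.2) - u p) / h

noncomputable def Dyp (N : ℕ) (h : ℝ) (u : ZMod N × ZMod N → ℝ) : ZMod N × ZMod N → ℝ :=
  fun p => (u (p.1, p.2 + 1) - u p) / h

noncomputable def Ax (N : ℕ) (w : ZMod N × ZMod N → ℝ) : ZMod N × ZMod N → ℝ :=
  fun p => (w p + w (p.1 - 1, p.2)) / 2

noncomputable def Ay (N : ℕ) (w : ZMod N × ZMod N → ℝ) : ZMod N × ZMod N → ℝ :=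
  fun p => (w p + w (p.1, p.2 - 1)) / 2

lemma shiftx (N : ℕ) [NeZero N] (g : ZMod N × ZMod N → ℝ) :
    ∑ p : ZMod N × ZMod N, g (p.1 + 1, p.2) = ∑ p : ZMod N × ZMod N, g p := by
  exact Fintype.sum_equiv ((Equiv.addRight (1 : ZMod N)).prodCongr (Equiv.refl _)) _ _
    (fun p => rfl)

lemma shifty (N : ℕ) [NeZero N] (g : ZMod N × ZMod N → ℝ) :
    ∑ p : ZMod N × ZMod N, g (p.1, p.2 + 1) = ∑ p : ZMod N × ZMod N, g p := by
  exact Fintype.sum_equiv ((Equiv.refl _).prodCongr (Equiv.addRight (1 : ZMod N))) _ _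
    (fun p => rfl)

lemma shiftx' (N : ℕ) [NeZero N] (g : ZMod N × ZMod N → ℝ) :
    ∑ p : ZMod N × ZMod N, g (p.1 - 1, p.2) = ∑ p : ZMod N × ZMod N, g p := by
  exact Fintype.sum_equiv ((Equiv.subRight (1 : ZMod N)).prodCongr (Equiv.refl _)) _ _
    (fun p => rfl)

lemma shifty' (N : ℕ) [NeZero N] (g : ZMod N × ZMod N → ℝ) :
    ∑ p : ZMod N × ZMod N, g (p.1, p.2 - 1) = ∑ p : ZMod N × ZMod N, g p := by
  exact Fintype.sum_equiv ((Equiv.refl _).prodCongr (Equiv.subRight (1 : ZMod N))) _ _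
    (fun p => rfl)

/-- Summation by parts in the x direction. -/
lemma sbp_x (N : ℕ) [NeZero N] (h : ℝ) (a f : ZMod N × ZMod N → ℝ) :
    ∑ p : ZMod N × ZMod N, (Dxp N h a p * f p + a p * Dxm N h f p) = 0 := by
  have h1 : ∑ p : ZMod N × ZMod N, a (p.1 + 1, p.2) * f p
      = ∑ p : ZMod N × ZMod N, a p * f (p.1 - 1, p.2) := by
    have := shiftx N (fun p => a p * f (p.1 - 1, p.2))
    simpa using this
  calc ∑ p : ZMod N × ZMod N, (Dxp N h a p * f p + a p * Dxm N h f p)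
      = ∑ p : ZMod N × ZMod N,
          ((a (p.1 + 1, p.2) * f p) / h - (a p * f (p.1 - 1, p.2)) / h) := by
        refine Finset.sum_congr rfl fun p _ => ?_
        simp only [Dxp, Dxm]; ring
    _ = (∑ p : ZMod N × ZMod N, a (p.1 + 1, p.2) * f p) / h
          - (∑ p : ZMod N × ZMod N, a p * f (p.1 - 1, p.2)) / h := by
        rw [Finset.sum_sub_distrib, Finset.sum_div, Finset.sum_div]
    _ = 0 := by rw [h1]; ring

/-- Summation by parts in the y direction. -/
lemma sbp_y (N : ℕ) [NeZero N] (h : ℝ) (a f : ZMod N × ZMod N → ℝ) :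
    ∑ p : ZMod N × ZMod N, (Dyp N h a p * f p + a p * Dym N h f p) = 0 := by
  have h1 : ∑ p : ZMod N × ZMod N, a (p.1, p.2 + 1) * f p
      = ∑ p : ZMod N × ZMod N, a p * f (p.1, p.2 - 1) := by
    have := shifty N (fun p => a p * f (p.1, p.2 - 1))
    simpa using this
  calc ∑ p : ZMod N × ZMod N, (Dyp N h a p * f p + a p * Dym N h f p)
      = ∑ p : ZMod N × ZMod N,
          ((a (p.1, p.2 + 1) * f p) / h - (a p * f (p.1, p.2 - 1)) / h) := by
        refine Finset.sum_congr rfl fun p _ => ?_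
        simp only [Dyp, Dym]; ring
    _ = (∑ p : ZMod N × ZMod N, a (p.1, p.2 + 1) * f p) / h
          - (∑ p : ZMod N × ZMod N, a p * f (p.1, p.2 - 1)) / h := by
        rw [Finset.sum_sub_distrib, Finset.sum_div, Finset.sum_div]
    _ = 0 := by rw [h1]; ring

/-- Core estimate in Lemma 3.5 (lemma:non): with `T = ∇⁺_h·((𝒜 e) ∇⁻_h φ)` and
`‖∇⁻_h φ‖_∞ ≤ B'`, for every grid function `f`,
`|⟨T, f⟩| ≤ √2 B' ‖e‖ ‖∇⁻_h f‖`. -/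
theorem stmt14 (N : ℕ) [NeZero N] (h B' : ℝ) (hh : 0 < h) (hB : 0 ≤ B')
    (e φ f : ZMod N × ZMod N → ℝ)
    (hφ : ∀ p : ZMod N × ZMod N, (Dxm N h φ p) ^ 2 + (Dym N h φ p) ^ 2 ≤ B' ^ 2) :
    |h ^ 2 * ∑ p : ZMod N × ZMod N,
        (Dxp N h (fun r => Ax N e r * Dxm N h φ r) p
          + Dyp N h (fun r => Ay N e r * Dym N h φ r) p) * f p|
      ≤ Real.sqrt 2 * B' * Real.sqrt (h ^ 2 * ∑ p : ZMod N × ZMod N, e p ^ 2)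
          * Real.sqrt (h ^ 2 * ∑ p : ZMod N × ZMod N,
              ((Dxm N h f p) ^ 2 + (Dym N h f p) ^ 2)) := by
  set a : ZMod N × ZMod N → ℝ := fun r => Ax N e r * Dxm N h φ r with ha
  set b : ZMod N × ZMod N → ℝ := fun r => Ay N e r * Dym N h φ r with hb
  set S : ℝ := ∑ p : ZMod N × ZMod N,
      (Dxp N h a p + Dyp N h b p) * f p with hS
  -- summation by parts
  have sbp : S = -∑ p : ZMod N × ZMod N,
      (a p * Dxm N h f p + b p * Dym N h f p) := by
    have hx := sbp_x N h a f
    have hy := sbp_y N h b f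
    have expand : S + ∑ p : ZMod N × ZMod N,
        (a p * Dxm N h f p + b p * Dym N h f p)
        = ∑ p : ZMod N × ZMod N, (Dxp N h a p * f p + a p * Dxm N h f p)
          + ∑ p : ZMod N × ZMod N, (Dyp N h b p * f p + b p * Dym N h f p) := by
      rw [hS, ← Finset.sum_add_distrib, ← Finset.sum_add_distrib]
      refine Finset.sum_congr rfl fun p _ => ?_
      ring
    rw [hx, hy] at expand
    linarith
  -- the Cauchy--Schwarz weight functions
  set u : ZMod N × ZMod N → ℝ := fun p => Real.sqrt ((Ax N e p) ^ 2 + (Ay N e p) ^ 2) with hu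
  set v : ZMod N × ZMod N → ℝ := fun p =>
      Real.sqrt ((Dxm N h f p) ^ 2 + (Dym N h f p) ^ 2) with hv
  -- pointwise bound
  have pointwise : ∀ p : ZMod N × ZMod N,
      |a p * Dxm N h f p + b p * Dym N h f p| ≤ B' * (u p * v p) := by
    intro p
    have hA : (0:ℝ) ≤ (Ax N e p) ^ 2 + (Ay N e p) ^ 2 := by positivity
    have hV : (0:ℝ) ≤ (Dxm N h f p) ^ 2 + (Dym N h f p) ^ 2 := by positivity
    have hu2 : u p ^ 2 = (Ax N e p) ^ 2 + (Ay N e p) ^ 2 := Real.sq_sqrt hA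
    have hv2 : v p ^ 2 = (Dxm N h f p) ^ 2 + (Dym N h f p) ^ 2 := Real.sq_sqrt hV
    have hun : 0 ≤ u p := Real.sqrt_nonneg _
    have hvn : 0 ≤ v p := Real.sqrt_nonneg _
    have hφx : (Dxm N h φ p) ^ 2 ≤ B' ^ 2 := by nlinarith [hφ p, sq_nonneg (Dym N h φ p)]
    have hφy : (Dym N h φ p) ^ 2 ≤ B' ^ 2 := by nlinarith [hφ p, sq_nonneg (Dxm N h φ p)]
    have hsq : (a p * Dxm N h f p + b p * Dym N h f p) ^ 2 ≤ (B' * (u p * v p)) ^ 2 := by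
      have cs : (a p * Dxm N h f p + b p * Dym N h f p) ^ 2
          ≤ (a p ^ 2 + b p ^ 2) * ((Dxm N h f p) ^ 2 + (Dym N h f p) ^ 2) := by
        nlinarith [sq_nonneg (a p * Dym N h f p - b p * Dxm N h f p)]
      have hab : a p ^ 2 + b p ^ 2 ≤ B' ^ 2 * ((Ax N e p) ^ 2 + (Ay N e p) ^ 2) := by
        have : a p ^ 2 = (Ax N e p) ^ 2 * (Dxm N h φ p) ^ 2 := by rw [ha]; ring
        have : b p ^ 2 = (Ay N e p) ^ 2 * (Dym N h φ p) ^ 2 := by rw [hb]; ring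
        nlinarith [sq_nonneg (Ax N e p), sq_nonneg (Ay N e p)]
      calc (a p * Dxm N h f p + b p * Dym N h f p) ^ 2
          ≤ (a p ^ 2 + b p ^ 2) * ((Dxm N h f p) ^ 2 + (Dym N h f p) ^ 2) := cs
        _ ≤ B' ^ 2 * ((Ax N e p) ^ 2 + (Ay N e p) ^ 2)
              * ((Dxm N h f p) ^ 2 + (Dym N h f p) ^ 2) := by
            exact mul_le_mul_of_nonneg_right hab hV
        _ = (B' * (u p * v p)) ^ 2 := by rw [mul_pow, mul_pow, hu2, hv2]; ring
    have := Real.sqrt_le_sqrt hsq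
    rw [Real.sqrt_sq_eq_abs, Real.sqrt_sq (by positivity)] at this
    exact this
  -- sum bound via Cauchy--Schwarz
  have sumuv : ∑ p : ZMod N × ZMod N, u p * v p
      ≤ Real.sqrt (∑ p : ZMod N × ZMod N, u p ^ 2)
        * Real.sqrt (∑ p : ZMod N × ZMod N, v p ^ 2) := by
    have cs := Finset.sum_mul_sq_le_sq_mul_sq Finset.univ u v
    have huv : 0 ≤ ∑ p : ZMod N × ZMod N, u p * v p :=
      Finset.sum_nonneg fun p _ => mul_nonneg (Real.sqrt_nonneg _) (Real.sqrt_nonneg _)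
    calc ∑ p : ZMod N × ZMod N, u p * v p
        = Real.sqrt ((∑ p : ZMod N × ZMod N, u p * v p) ^ 2) := (Real.sqrt_sq huv).symm
      _ ≤ Real.sqrt ((∑ p : ZMod N × ZMod N, u p ^ 2)
            * ∑ p : ZMod N × ZMod N, v p ^ 2) := Real.sqrt_le_sqrt cs
      _ = _ := Real.sqrt_mul (Finset.sum_nonneg fun p _ => sq_nonneg _) _
  have hSabs : |S| ≤ B' * (Real.sqrt (∑ p : ZMod N × ZMod N, u p ^ 2)
      * Real.sqrt (∑ p : ZMod N × ZMod N, v p ^ 2)) := by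
    rw [sbp, abs_neg]
    calc |∑ p : ZMod N × ZMod N, (a p * Dxm N h f p + b p * Dym N h f p)|
        ≤ ∑ p : ZMod N × ZMod N, |a p * Dxm N h f p + b p * Dym N h f p| :=
          Finset.abs_sum_le_sum_abs _ _
      _ ≤ ∑ p : ZMod N × ZMod N, B' * (u p * v p) :=
          Finset.sum_le_sum fun p _ => pointwise p
      _ = B' * ∑ p : ZMod N × ZMod N, u p * v p := by rw [Finset.mul_sum]
      _ ≤ _ := mul_le_mul_of_nonneg_left sumuv hB
  -- averaging is a contraction
  have avgx : ∑ p : ZMod N × ZMod N, (Ax N e p) ^ 2 ≤ ∑ p : ZMod N × ZMod N, e p ^ 2 := by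
    have step : ∀ p : ZMod N × ZMod N,
        (Ax N e p) ^ 2 ≤ (e p ^ 2 + e (p.1 - 1, p.2) ^ 2) / 2 := by
      intro p
      simp only [Ax]
      nlinarith [sq_nonneg (e p - e (p.1 - 1, p.2))]
    calc ∑ p : ZMod N × ZMod N, (Ax N e p) ^ 2
        ≤ ∑ p : ZMod N × ZMod N, (e p ^ 2 + e (p.1 - 1, p.2) ^ 2) / 2 :=
          Finset.sum_le_sum fun p _ => step p
      _ = ((∑ p : ZMod N × ZMod N, e p ^ 2)
            + ∑ p : ZMod N × ZMod N, e (p.1 - 1, p.2) ^ 2) / 2 := by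
          rw [← Finset.sum_div, Finset.sum_add_distrib]
      _ = ∑ p : ZMod N × ZMod N, e p ^ 2 := by
          rw [shiftx' N (fun p => e p ^ 2)]; ring
  have avgy : ∑ p : ZMod N × ZMod N, (Ay N e p) ^ 2 ≤ ∑ p : ZMod N × ZMod N, e p ^ 2 := by
    have step : ∀ p : ZMod N × ZMod N,
        (Ay N e p) ^ 2 ≤ (e p ^ 2 + e (p.1, p.2 - 1) ^ 2) / 2 := by
      intro p
      simp only [Ay]
      nlinarith [sq_nonneg (e p - e (p.1, p.2 - 1))]
    calc ∑ p : ZMod N × ZMod N, (Ay N e p) ^ 2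
        ≤ ∑ p : ZMod N × ZMod N, (e p ^ 2 + e (p.1, p.2 - 1) ^ 2) / 2 :=
          Finset.sum_le_sum fun p _ => step p
      _ = ((∑ p : ZMod N × ZMod N, e p ^ 2)
            + ∑ p : ZMod N × ZMod N, e (p.1, p.2 - 1) ^ 2) / 2 := by
          rw [← Finset.sum_div, Finset.sum_add_distrib]
      _ = ∑ p : ZMod N × ZMod N, e p ^ 2 := by
          rw [shifty' N (fun p => e p ^ 2)]; ring
  have hu2sum : ∑ p : ZMod N × ZMod N, u p ^ 2 ≤ 2 * ∑ p : ZMod N × ZMod N, e p ^ 2 := by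
    have : ∑ p : ZMod N × ZMod N, u p ^ 2
        = ∑ p : ZMod N × ZMod N, ((Ax N e p) ^ 2 + (Ay N e p) ^ 2) := by
      refine Finset.sum_congr rfl fun p _ => ?_
      exact Real.sq_sqrt (by positivity)
    rw [this, Finset.sum_add_distrib]
    linarith
  have hv2sum : ∑ p : ZMod N × ZMod N, v p ^ 2
      = ∑ p : ZMod N × ZMod N, ((Dxm N h f p) ^ 2 + (Dym N h f p) ^ 2) := by
    refine Finset.sum_congr rfl fun p _ => ?_
    exact Real.sq_sqrt (by positivity)
  -- assemble
  set E : ℝ := ∑ p : ZMod N × ZMod N, e p ^ 2 with hE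
  set F : ℝ := ∑ p : ZMod N × ZMod N, ((Dxm N h f p) ^ 2 + (Dym N h f p) ^ 2) with hF
  have hEnn : 0 ≤ E := Finset.sum_nonneg fun p _ => sq_nonneg _
  have hFnn : 0 ≤ F := Finset.sum_nonneg fun p _ => by positivity
  have sqrtu : Real.sqrt (∑ p : ZMod N × ZMod N, u p ^ 2) ≤ Real.sqrt 2 * Real.sqrt E := by
    rw [← Real.sqrt_mul (by norm_num : (0:ℝ) ≤ 2)]
    exact Real.sqrt_le_sqrt hu2sum
  have hSabs' : |S| ≤ B' * (Real.sqrt 2 * Real.sqrt E * Real.sqrt F) := by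
    refine hSabs.trans ?_
    apply mul_le_mul_of_nonneg_left _ hB
    rw [hv2sum]
    exact mul_le_mul_of_nonneg_right sqrtu (Real.sqrt_nonneg _)
  have habs2 : |h ^ 2 * S| = h ^ 2 * |S| := by
    rw [abs_mul, abs_of_nonneg (sq_nonneg h)]
  rw [habs2]
  have hsqE : Real.sqrt (h ^ 2 * E) = h * Real.sqrt E := by
    rw [Real.sqrt_mul (sq_nonneg h), Real.sqrt_sq hh.le]
  have hsqF : Real.sqrt (h ^ 2 * F) = h * Real.sqrt F := by
    rw [Real.sqrt_mul (sq_nonneg h), Real.sqrt_sq hh.le]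
  rw [hsqE, hsqF]
  calc h ^ 2 * |S| ≤ h ^ 2 * (B' * (Real.sqrt 2 * Real.sqrt E * Real.sqrt F)) :=
        mul_le_mul_of_nonneg_left hSabs' (sq_nonneg h)
    _ = Real.sqrt 2 * B' * (h * Real.sqrt E) * (h * Real.sqrt F) := by ring
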